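/- Let T be a finite tree with nonnegative edge lengths rooted at o, and for X ⊆ V let mst(X) be the cost of the minimal subtree containing X ∪ {o}. Then for any vertex sets X₁, X₂, X₃, X₄: mst(X₁ ∪ X₂ ∪ X₃) + mst(X₂ ∪ X₃ ∪ X₄) ≤ mst(X₁ ∪ X₂) + mst(X₂ ∪ X₃) + mst(X₃ ∪ X₄). -/
import Mathlib


open scoped Classical

/-- `mst(X) = Σ_{e ∈ E : V_e ∩ X ≠ ∅} ℓ(e)`: the cost of the minimal subtree of a
rooted tree containing `X ∪ {o}`, where `Ve e` is the set of vertices strictly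
below edge `e`. -/
noncomputable def mstCost {V E : Type*} [Fintype E] (ℓ : E → ℝ) (Ve : E → Set V)
    (X : Set V) : ℝ :=
  ∑ e : E, if (Ve e ∩ X).Nonempty then ℓ e else 0

theorem stmt_4 {V E : Type*} [Fintype E] (ℓ : E → ℝ) (hℓ : ∀ e, 0 ≤ ℓ e)
    (Ve : E → Set V) (X₁ X₂ X₃ X₄ : Set V) :
    mstCost ℓ Ve (X₁ ∪ X₂ ∪ X₃) + mstCost ℓ Ve (X₂ ∪ X₃ ∪ X₄) ≤
      mstCost ℓ Ve (X₁ ∪ X₂) + mstCost ℓ Ve (X₂ ∪ X₃) + mstCost ℓ Ve (X₃ ∪ X₄) := by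
  unfold mstCost
  rw [← Finset.sum_add_distrib, ← Finset.sum_add_distrib, ← Finset.sum_add_distrib]
  refine Finset.sum_le_sum fun e _ => ?_
  have h := hℓ e
  by_cases h1 : (Ve e ∩ X₁).Nonempty <;>
  by_cases h2 : (Ve e ∩ X₂).Nonempty <;>
  by_cases h3 : (Ve e ∩ X₃).Nonempty <;>
  by_cases h4 : (Ve e ∩ X₄).Nonempty <;>
  simp [Set.inter_union_distrib_left, Set.union_nonempty, h1, h2, h3, h4] <;>
  linarith
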